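/- For all integers i, j ≥ 0: a_{i,j} is divisible by 5^(max(0, ⌊(5j − i + 1)/2⌋)) and b_{i,j} is divisible by 5^(max(0, ⌊(5j − i)/2⌋)), where a_{i,j} = m_{6i, i+j} and b_{i,j} = m_{6i+1, i+j}. -/

import Mathlib

/-- The matrix `(m_{i,j})` of Theorem 3.1 (powers of 5): rows `0 ≤ i ≤ 4` are given
explicitly, and for `i ≥ 5`, `m_{i,0} = 0` while for `j ≥ 1`,
`m_{i,j} = 25 m_{i−1,j−1} + 25 m_{i−2,j−1} + 15 m_{i−3,j−1} + 5 m_{i−4,j−1} + m_{i−5,j−1}`. -/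
def mMat : ℕ → ℕ → ℤ
  | 0, 0 => 1
  | 1, 1 => 5 ^ 3
  | 2, 1 => 4 * 5 ^ 2
  | 2, 2 => 5 ^ 5
  | 3, 1 => 9 * 5
  | 3, 2 => 9 * 5 ^ 4
  | 3, 3 => 5 ^ 7
  | 4, 1 => 2 * 5
  | 4, 2 => 44 * 5 ^ 3
  | 4, 3 => 14 * 5 ^ 6
  | 4, 4 => 5 ^ 9
  | i + 5, j + 1 =>
      25 * mMat (i + 4) j + 25 * mMat (i + 3) j + 15 * mMat (i + 2) j +
        5 * mMat (i + 1) j + mMat i j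
  | _, _ => 0
  termination_by i j => (j, i)

/-- `a_{i,j} = m_{6i, i+j}`. -/
def aMat (i j : ℕ) : ℤ := mMat (6 * i) (i + j)

/-- `b_{i,j} = m_{6i+1, i+j}`. -/
def bMat (i j : ℕ) : ℤ := mMat (6 * i + 1) (i + j)

unseal mMat in
lemma mMat_rec (i j : ℕ) : mMat (i+5) (j+1) = 25 * mMat (i + 4) j + 25 * mMat (i + 3) j
    + 15 * mMat (i + 2) j + 5 * mMat (i + 1) j + mMat i j := by
  show mMat._unary ⟨i+5, j+1⟩ = _
  conv_lhs => unfold mMat._unary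
  rfl

unseal mMat in lemma mMat_00 : mMat 0 0 = 1 := by
  show mMat._unary ⟨0,0⟩ = _
  conv_lhs => unfold mMat._unary
  rfl

unseal mMat in lemma mMat_r0 (r : ℕ) : mMat (r+1) 0 = 0 := by
  show mMat._unary ⟨r+1,0⟩ = _
  conv_lhs => unfold mMat._unary
  rcases r with _|_|_|_|r <;> rfl

unseal mMat in lemma mMat_0c (c : ℕ) : mMat 0 (c+1) = 0 := by
  show mMat._unary ⟨0,c+1⟩ = _
  conv_lhs => unfold mMat._unary
  rfl

unseal mMat in lemma mMat_1c (c : ℕ) : mMat 1 (c+1) = if c = 0 then 5^3 else 0 := by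
  show mMat._unary ⟨1,c+1⟩ = _
  conv_lhs => unfold mMat._unary
  rcases c with _|c <;> rfl

unseal mMat in lemma mMat_2c (c : ℕ) : mMat 2 (c+1) =
    if c = 0 then 4 * 5^2 else if c = 1 then 5^5 else 0 := by
  show mMat._unary ⟨2,c+1⟩ = _
  conv_lhs => unfold mMat._unary
  rcases c with _|_|c <;> rfl

unseal mMat in lemma mMat_3c (c : ℕ) : mMat 3 (c+1) =
    if c = 0 then 9 * 5 else if c = 1 then 9 * 5^4 else if c = 2 then 5^7 else 0 := by
  show mMat._unary ⟨3,c+1⟩ = _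
  conv_lhs => unfold mMat._unary
  rcases c with _|_|_|c <;> rfl

unseal mMat in lemma mMat_4c (c : ℕ) : mMat 4 (c+1) =
    if c = 0 then 2 * 5 else if c = 1 then 44 * 5^3 else if c = 2 then 14 * 5^6
    else if c = 3 then 5^9 else 0 := by
  show mMat._unary ⟨4,c+1⟩ = _
  conv_lhs => unfold mMat._unary
  rcases c with _|_|_|_|c <;> rfl

private lemma step5 {E t e : ℕ} {m c : ℤ} (h : (5:ℤ)^e ∣ m) (h5 : (5:ℤ)^t ∣ c)
    (hle : E ≤ t + e) : (5:ℤ)^E ∣ c * m :=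
  (pow_dvd_pow 5 hle).trans (by rw [pow_add]; exact mul_dvd_mul h5 h)

lemma mMat_key : ∀ c r : ℕ, (5:ℤ) ^ ((5*(c:ℤ) - (r:ℤ) + 1)/2).toNat ∣ mMat r c := by
  intro c
  induction c using Nat.strong_induction_on with
  | _ c ih =>
    intro r
    match c, r with
    | 0, 0 => rw [mMat_00]; norm_num
    | 0, r+1 => rw [mMat_r0]; exact dvd_zero _
    | c+1, 0 => rw [mMat_0c]; exact dvd_zero _
    | c+1, 1 =>
      rw [mMat_1c]
      rcases c with _|c
      · decide
      · simp
    | c+1, 2 =>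
      rw [mMat_2c]
      rcases c with _|_|c
      · decide
      · decide
      · simp
    | c+1, 3 =>
      rw [mMat_3c]
      rcases c with _|_|_|c
      · decide
      · decide
      · decide
      · simp
    | c+1, 4 =>
      rw [mMat_4c]
      rcases c with _|_|_|_|c
      · decide
      · decide
      · decide
      · decide
      · simp
    | j+1, i+5 =>
      rw [mMat_rec]
      have hj : j < j + 1 := Nat.lt_succ_self j
      have h4 := ih j hj (i+4)
      have h3 := ih j hj (i+3)
      have h2 := ih j hj (i+2)
      have h1 := ih j hj (i+1)
      have h0 := ih j hj i
      refine dvd_add (dvd_add (dvd_add (dvd_add ?_ ?_) ?_) ?_) ?_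
      · exact step5 h4 (show (5:ℤ)^2 ∣ 25 by norm_num) (by push_cast; omega)
      · exact step5 h3 (show (5:ℤ)^2 ∣ 25 by norm_num) (by push_cast; omega)
      · exact step5 h2 (show (5:ℤ)^1 ∣ 15 by norm_num) (by push_cast; omega)
      · exact step5 h1 (show (5:ℤ)^1 ∣ 5 by norm_num) (by push_cast; omega)
      · exact (pow_dvd_pow 5 (by push_cast; omega)).trans h0

/-- Corollary 3.7: `5^(max(0, ⌊(5j − i + 1)/2⌋))` divides `a_{i,j}` and
`5^(max(0, ⌊(5j − i)/2⌋))` divides `b_{i,j}`. -/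
theorem aMat_bMat_five_valuation (i j : ℕ) :
    (5 : ℤ) ^ ((5 * (j : ℤ) - (i : ℤ) + 1) / 2).toNat ∣ aMat i j ∧
    (5 : ℤ) ^ ((5 * (j : ℤ) - (i : ℤ)) / 2).toNat ∣ bMat i j := by
  constructor
  · have h := mMat_key (i + j) (6 * i)
    have he : ((5*((i + j : ℕ):ℤ) - ((6 * i : ℕ):ℤ) + 1)/2).toNat
        = ((5 * (j : ℤ) - (i : ℤ) + 1) / 2).toNat := by push_cast; omega
    rw [he] at h
    exact h
  · have h := mMat_key (i + j) (6 * i + 1)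
    have he : ((5*((i + j : ℕ):ℤ) - ((6 * i + 1 : ℕ):ℤ) + 1)/2).toNat
        = ((5 * (j : ℤ) - (i : ℤ)) / 2).toNat := by push_cast; omega
    rw [he] at h
    exact h
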